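/- Let κ ∈ (0,1), c = κ²/(1+κ²)², and let u : ℝ → ℝ be the solution of u″ = u³ − u with u(0) = 0 and u′(0) = √(2c), which is periodic with period T = 4√(1+κ²)·K(κ). Then the time average of the kinetic energy satisfies (1/T)∫₀^T u′(t)² dt − c = −(1/(3(1+κ²))) · [ (2+κ²)/(1+κ²) − 2 E(κ)/K(κ) ]. -/

import Mathlib

/-- Complete elliptic integral of the first kind,
`K(κ) = ∫₀^{π/2} (1 − κ² sin²t)^{−1/2} dt`. -/
noncomputable def ellK (κ : ℝ) : ℝ :=
  ∫ t in (0:ℝ)..(Real.pi/2), 1 / Real.sqrt (1 - κ^2 * Real.sin t ^ 2)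

/-- Complete elliptic integral of the second kind,
`E(κ) = ∫₀^{π/2} (1 − κ² sin²t)^{1/2} dt`. -/
noncomputable def ellE (κ : ℝ) : ℝ :=
  ∫ t in (0:ℝ)..(Real.pi/2), Real.sqrt (1 - κ^2 * Real.sin t ^ 2)

open Real intervalIntegral MeasureTheory Set

/-! ### Auxiliary definitions -/

noncomputable def del (κ φ : ℝ) : ℝ := Real.sqrt (1 - κ^2 * Real.sin φ ^ 2)
noncomputable def Fint (κ x : ℝ) : ℝ := ∫ s in (0:ℝ)..x, 1 / del κ s
noncomputable def amf (κ : ℝ) : ℝ → ℝ := Function.invFun (Fint κ)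
noncomputable def sg (κ : ℝ) : ℝ := Real.sqrt (1 + κ^2)
noncomputable def aa (κ : ℝ) : ℝ := Real.sqrt 2 * κ / sg κ
noncomputable def wsol (κ t : ℝ) : ℝ := aa κ * Real.sin (amf κ (t / sg κ))
noncomputable def wvsol (κ t : ℝ) : ℝ :=
  aa κ * Real.cos (amf κ (t / sg κ)) * del κ (amf κ (t / sg κ)) / sg κ
noncomputable def Pint (κ x : ℝ) : ℝ := ∫ s in (0:ℝ)..x, Real.cos s ^ 2 * del κ s

/-! ### Basic facts about `del`, `Fint`, `amf` -/

lemma del_sq_pos {κ : ℝ} (hκ : κ^2 < 1) (φ : ℝ) : 0 < 1 - κ^2 * Real.sin φ ^ 2 := by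
  nlinarith [Real.sin_sq_le_one φ, sq_nonneg (Real.sin φ), sq_nonneg κ, sq_nonneg (κ * Real.sin φ)]

lemma del_pos {κ : ℝ} (hκ : κ^2 < 1) (φ : ℝ) : 0 < del κ φ := Real.sqrt_pos.2 (del_sq_pos hκ φ)

lemma del_sq {κ : ℝ} (hκ : κ^2 < 1) (φ : ℝ) : del κ φ ^ 2 = 1 - κ^2 * Real.sin φ ^ 2 :=
  Real.sq_sqrt (del_sq_pos hκ φ).le

lemma del_le_one {κ : ℝ} (φ : ℝ) : del κ φ ≤ 1 := by
  rw [show (1:ℝ) = Real.sqrt 1 by simp]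
  apply Real.sqrt_le_sqrt; nlinarith [sq_nonneg (κ * Real.sin φ)]

lemma one_le_inv_del {κ : ℝ} (hκ : κ^2 < 1) (φ : ℝ) : 1 ≤ 1 / del κ φ :=
  (le_div_iff₀ (del_pos hκ φ)).2 (by simpa using del_le_one φ)

lemma del_cont {κ : ℝ} : Continuous (del κ) := by
  apply Real.continuous_sqrt.comp; continuity

lemma inv_del_cont {κ : ℝ} (hκ : κ^2 < 1) : Continuous (fun s => 1 / del κ s) :=
  continuous_const.div del_cont (fun s => (del_pos hκ s).ne')

lemma Fint_hasDerivAt {κ : ℝ} (hκ : κ^2 < 1) (x : ℝ) : HasDerivAt (Fint κ) (1 / del κ x) x :=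
  intervalIntegral.integral_hasDerivAt_right
    ((inv_del_cont hκ).intervalIntegrable _ _)
    (inv_del_cont hκ).aestronglyMeasurable.stronglyMeasurableAtFilter
    (inv_del_cont hκ).continuousAt

lemma Fint_strictMono {κ : ℝ} (hκ : κ^2 < 1) : StrictMono (Fint κ) :=
  strictMono_of_deriv_pos (fun x => by
    rw [HasDerivAt.deriv (Fint_hasDerivAt hκ x)]
    exact div_pos one_pos (del_pos hκ x))

lemma le_Fint {κ : ℝ} (hκ : κ^2 < 1) (x : ℝ) (hx : 0 ≤ x) : x ≤ Fint κ x := by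
  calc x = ∫ s in (0:ℝ)..x, 1 := by simp
  _ ≤ Fint κ x := by
      apply intervalIntegral.integral_mono_on hx (intervalIntegrable_const)
        ((inv_del_cont hκ).intervalIntegrable _ _)
      exact fun s _ => one_le_inv_del hκ s

lemma Fint_le {κ : ℝ} (hκ : κ^2 < 1) (x : ℝ) (hx : x ≤ 0) : Fint κ x ≤ x := by
  have h : Fint κ x = - ∫ s in x..(0:ℝ), 1 / del κ s := by
    rw [Fint, intervalIntegral.integral_symm]
  rw [h]
  have h2 : x = - ∫ s in x..(0:ℝ), (1:ℝ) := by simp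
  nth_rewrite 2 [h2]
  apply neg_le_neg
  have := intervalIntegral.integral_mono_on (μ := MeasureTheory.volume) hx intervalIntegrable_const
    ((inv_del_cont hκ).intervalIntegrable x 0) (fun s _ => one_le_inv_del hκ s)
  simpa using this

lemma Fint_cont {κ : ℝ} (hκ : κ^2 < 1) : Continuous (Fint κ) :=
  Differentiable.continuous (fun x => (Fint_hasDerivAt hκ x).differentiableAt)

lemma Fint_surj {κ : ℝ} (hκ : κ^2 < 1) : Function.Surjective (Fint κ) := by
  apply Continuous.surjective (Fint_cont hκ)
  · exact Filter.tendsto_atTop_mono' _ (Filter.eventually_atTop.2 ⟨0, fun x hx => le_Fint hκ x hx⟩)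
      Filter.tendsto_id
  · exact Filter.tendsto_atBot_mono' _ (Filter.eventually_atBot.2 ⟨0, fun x hx => Fint_le hκ x hx⟩)
      Filter.tendsto_id

lemma amf_rightInv {κ : ℝ} (hκ : κ^2 < 1) (y : ℝ) : Fint κ (amf κ y) = y :=
  Function.rightInverse_invFun (Fint_surj hκ) y

lemma amf_leftInv {κ : ℝ} (hκ : κ^2 < 1) (x : ℝ) : amf κ (Fint κ x) = x :=
  Function.leftInverse_invFun (Fint_strictMono hκ).injective x

lemma amf_continuous {κ : ℝ} (hκ : κ^2 < 1) : Continuous (amf κ) := by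
  have heq : amf κ = ⇑(StrictMono.orderIsoOfSurjective (Fint κ) (Fint_strictMono hκ)
      (Fint_surj hκ)).symm := by
    funext y
    apply (Fint_strictMono hκ).injective
    rw [amf_rightInv hκ]
    exact (StrictMono.orderIsoOfSurjective_self_symm_apply (Fint κ) (Fint_strictMono hκ)
      (Fint_surj hκ) y).symm
  rw [heq]
  exact OrderIso.continuous _

lemma amf_hasDerivAt {κ : ℝ} (hκ : κ^2 < 1) (x : ℝ) :
    HasDerivAt (amf κ) (del κ (amf κ x)) x := by
  have h := HasDerivAt.of_local_left_inverse ((amf_continuous hκ).continuousAt)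
    (Fint_hasDerivAt hκ (amf κ x)) (one_div_ne_zero (del_pos hκ _).ne')
    (Filter.Eventually.of_forall (amf_rightInv hκ))
  simpa using h

lemma Fint_zero {κ : ℝ} : Fint κ 0 = 0 := by simp [Fint]

lemma amf_zero {κ : ℝ} (hκ : κ^2 < 1) : amf κ 0 = 0 := by
  have := amf_leftInv hκ 0
  rwa [Fint_zero] at this

/-! ### The explicit solution -/

lemma sg_pos {κ : ℝ} : 0 < sg κ := Real.sqrt_pos.2 (by positivity)
lemma sg_sq {κ : ℝ} : sg κ ^ 2 = 1 + κ^2 := Real.sq_sqrt (by positivity)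
lemma aa_sq {κ : ℝ} (hκ0 : 0 ≤ κ) : aa κ ^ 2 = 2 * κ^2 / (1 + κ^2) := by
  rw [aa, div_pow, mul_pow, sg_sq, Real.sq_sqrt (by norm_num : (0:ℝ) ≤ 2)]

lemma del_hasDerivAt {κ : ℝ} (hκ : κ^2 < 1) (φ : ℝ) :
    HasDerivAt (del κ) (-(κ^2) * Real.sin φ * Real.cos φ / del κ φ) φ := by
  have h1 : HasDerivAt (fun φ => 1 - κ^2 * Real.sin φ ^ 2)
      (-(κ^2) * (2 * Real.sin φ * Real.cos φ)) φ := by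
    have := ((Real.hasDerivAt_sin φ).pow 2).const_mul (κ^2)
    have h2 := (hasDerivAt_const φ (1:ℝ)).sub this
    refine h2.congr_deriv (Eq.symm ?_); ring
  have := (Real.hasDerivAt_sqrt (del_sq_pos hκ φ).ne').comp φ h1
  refine this.congr_deriv (Eq.symm ?_)
  rw [del]; field_simp

lemma inner_hasDerivAt {κ : ℝ} (t : ℝ) : HasDerivAt (fun t : ℝ => t / sg κ) (1 / sg κ) t := by
  simpa using (hasDerivAt_id t).div_const (sg κ)

lemma am_comp_hasDerivAt {κ : ℝ} (hκ : κ^2 < 1) (t : ℝ) :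
    HasDerivAt (fun t => amf κ (t / sg κ)) (del κ (amf κ (t / sg κ)) / sg κ) t := by
  have := (amf_hasDerivAt hκ (t / sg κ)).comp t (inner_hasDerivAt t)
  exact this.congr_deriv (by ring)

lemma wsol_hasDerivAt {κ : ℝ} (hκ : κ^2 < 1) (t : ℝ) : HasDerivAt (wsol κ) (wvsol κ t) t := by
  have h1 := ((Real.hasDerivAt_sin (amf κ (t / sg κ))).comp t
    (am_comp_hasDerivAt hκ t)).const_mul (aa κ)
  refine h1.congr_deriv (Eq.symm ?_)
  rw [wvsol]; ring

lemma wvsol_hasDerivAt {κ : ℝ} (hκ : κ^2 < 1) (hκ0 : 0 ≤ κ) (t : ℝ) :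
    HasDerivAt (wvsol κ) (wsol κ t ^ 3 - wsol κ t) t := by
  set φ := amf κ (t / sg κ) with hφ
  have hcos := (Real.hasDerivAt_cos φ).comp t (am_comp_hasDerivAt hκ t)
  have hdel := (del_hasDerivAt hκ φ).comp t (am_comp_hasDerivAt hκ t)
  have hprod := (hcos.mul hdel).const_mul (aa κ)
  have h := hprod.div_const (sg κ)
  have hfun : wvsol κ = fun x => aa κ * ((Real.cos ∘ fun t => amf κ (t / sg κ)) x *
      (del κ ∘ fun t => amf κ (t / sg κ)) x) / sg κ := by
    funext x; rw [wvsol]; simp [Function.comp]; ring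
  rw [hfun]
  refine h.congr_deriv (Eq.symm ?_)
  have hd := del_pos hκ φ
  have hd2 := del_sq hκ φ
  have hs2 : Real.cos φ ^ 2 = 1 - Real.sin φ ^ 2 := by
    have := Real.sin_sq_add_cos_sq φ; linarith
  have hsg : (0:ℝ) < sg κ := sg_pos
  have hsg2 : sg κ ^ 2 = 1 + κ^2 := sg_sq
  have haa : aa κ ^ 2 * (1 + κ^2) = 2 * κ^2 := by
    rw [aa_sq hκ0]; field_simp
  have e1 : -κ^2*Real.sin φ*Real.cos φ/del κ φ*(del κ φ/sg κ)
      = -κ^2*Real.sin φ*Real.cos φ/sg κ := by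
    field_simp
  rw [e1]
  simp only [wsol, Function.comp, ← hφ]
  field_simp
  ring_nf
  linear_combination (aa κ * Real.sin φ) * hd2 + (aa κ * Real.sin φ * κ^2) * hs2
    + (aa κ * Real.sin φ * (aa κ^2 * Real.sin φ^2 - 1)) * hsg2
    + (aa κ * Real.sin φ * Real.sin φ^2) * haa

/-! ### Symmetry lemma for integrals -/

lemma quad_integral (f : ℝ → ℝ) (hf : Continuous f)
    (h1 : ∀ x, f (Real.pi - x) = f x) (h2 : ∀ x, f (x + Real.pi) = f x) :
    ∫ x in (0:ℝ)..(2*Real.pi), f x = 4 * ∫ x in (0:ℝ)..(Real.pi/2), f x := by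
  have hint : ∀ a b : ℝ, IntervalIntegrable f volume a b := fun a b =>
    hf.intervalIntegrable a b
  have half : ∫ x in (0:ℝ)..Real.pi, f x = 2 * ∫ x in (0:ℝ)..(Real.pi/2), f x := by
    have hs : ∫ x in (Real.pi/2)..Real.pi, f x = ∫ x in (0:ℝ)..(Real.pi/2), f x := by
      have := intervalIntegral.integral_comp_sub_left (a := (0:ℝ)) (b := Real.pi/2) f Real.pi
      rw [show Real.pi - 0 = Real.pi by ring, show Real.pi - Real.pi/2 = Real.pi/2 by ring] at this
      rw [← this]
      apply intervalIntegral.integral_congr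
      intro x _; exact h1 x
    rw [← intervalIntegral.integral_add_adjacent_intervals (hint 0 (Real.pi/2))
      (hint (Real.pi/2) Real.pi), hs]; ring
  have shift : ∫ x in Real.pi..(2*Real.pi), f x = ∫ x in (0:ℝ)..Real.pi, f x := by
    have := intervalIntegral.integral_comp_add_right (a := (0:ℝ)) (b := Real.pi) f Real.pi
    rw [show (0:ℝ) + Real.pi = Real.pi by ring, show Real.pi + Real.pi = 2*Real.pi by ring] at this
    rw [← this]
    apply intervalIntegral.integral_congr
    intro x _; exact h2 x
  rw [← intervalIntegral.integral_add_adjacent_intervals (hint 0 Real.pi)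
    (hint Real.pi (2*Real.pi)), shift, half]; ring

/-! ### The elliptic integral identity -/

lemma Gderiv {κ : ℝ} (hκ : κ^2 < 1) (φ : ℝ) :
    HasDerivAt (fun φ => κ^2 * (Real.sin φ * Real.cos φ * del κ φ))
      (3*κ^2 * (Real.cos φ^2 * del κ φ) - (1+κ^2) * del κ φ + (1-κ^2) * (1 / del κ φ)) φ := by
  have h := (((Real.hasDerivAt_sin φ).mul (Real.hasDerivAt_cos φ)).mul
    (del_hasDerivAt hκ φ)).const_mul (κ^2)
  refine h.congr_deriv (Eq.symm ?_)
  rw [Pi.mul_apply]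
  have hd := del_pos hκ φ
  have hd2 := del_sq hκ φ
  have hs2 : Real.cos φ ^ 2 = 1 - Real.sin φ ^ 2 := by
    have := Real.sin_sq_add_cos_sq φ; linarith
  field_simp
  linear_combination (κ^2 - 1 - κ^2*Real.sin φ^2) * hd2
    + (2*κ^2*del κ φ^2 + κ^4*Real.sin φ^2) * hs2

lemma ell_identity {κ : ℝ} (hκ : κ^2 < 1) :
    3*κ^2 * (∫ φ in (0:ℝ)..(Real.pi/2), Real.cos φ^2 * del κ φ)
      - (1+κ^2) * (∫ φ in (0:ℝ)..(Real.pi/2), del κ φ)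
      + (1-κ^2) * (∫ φ in (0:ℝ)..(Real.pi/2), 1 / del κ φ) = 0 := by
  have hc1 : Continuous (fun φ => Real.cos φ^2 * del κ φ) :=
    (Real.continuous_cos.pow 2).mul del_cont
  have key := intervalIntegral.integral_eq_sub_of_hasDerivAt
    (f := fun φ => κ^2 * (Real.sin φ * Real.cos φ * del κ φ))
    (f' := fun φ => 3*κ^2 * (Real.cos φ^2 * del κ φ) - (1+κ^2) * del κ φ + (1-κ^2) * (1 / del κ φ))
    (a := 0) (b := Real.pi/2)
    (fun φ _ => Gderiv hκ φ)
    (by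
      apply Continuous.intervalIntegrable
      exact ((continuous_const.mul hc1).sub (continuous_const.mul del_cont)).add
        (continuous_const.mul (inv_del_cont hκ)))
  have key2 : ∫ φ in (0:ℝ)..(Real.pi/2), (3*κ^2 * (Real.cos φ^2 * del κ φ)
      - (1+κ^2) * del κ φ + (1-κ^2) * (1 / del κ φ)) = 0 := by
    simpa using key
  clear key
  rw [intervalIntegral.integral_add, intervalIntegral.integral_sub] at key2
  · rw [intervalIntegral.integral_const_mul, intervalIntegral.integral_const_mul,
      intervalIntegral.integral_const_mul] at key2
    linarith [key2]
  · exact (continuous_const.mul hc1).intervalIntegrable _ _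
  · exact (continuous_const.mul del_cont).intervalIntegrable _ _
  · exact ((continuous_const.mul hc1).sub (continuous_const.mul del_cont)).intervalIntegrable _ _
  · exact (continuous_const.mul (inv_del_cont hκ)).intervalIntegrable _ _

/-! ### Lipschitz bound and energy bound -/

lemma lip13 : LipschitzOnWith 13 (fun p : ℝ × ℝ => (p.2, p.1^3 - p.1))
    {p : ℝ × ℝ | |p.1| ≤ 2 ∧ |p.2| ≤ 2} := by
  rw [lipschitzOnWith_iff_dist_le_mul]
  rintro ⟨x1, x2⟩ ⟨hx1, hx2⟩ ⟨y1, y2⟩ ⟨hy1, hy2⟩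
  simp only [Prod.dist_eq, Real.dist_eq] at *
  push_cast
  have hM0 : (0:ℝ) ≤ max |x1 - y1| |x2 - y2| := le_max_iff.2 (Or.inl (abs_nonneg _))
  apply max_le
  · calc |x2 - y2| ≤ max |x1 - y1| |x2 - y2| := le_max_right _ _
    _ ≤ 13 * max |x1 - y1| |x2 - y2| := by linarith
  · have key : |x1^3 - x1 - (y1^3 - y1)| ≤ 13 * |x1 - y1| := by
      have h1 : x1^3 - x1 - (y1^3 - y1) = (x1 - y1) * (x1^2 + x1*y1 + y1^2 - 1) := by ring
      rw [h1, abs_mul]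
      have h2 : |x1^2 + x1*y1 + y1^2 - 1| ≤ 13 := by
        rw [abs_le]
        constructor <;> nlinarith [abs_le.1 hx1, abs_le.1 hy1, neg_abs_le x1, le_abs_self x1,
          neg_abs_le y1, le_abs_self y1, sq_nonneg (x1+y1), sq_nonneg (x1-y1)]
      calc |x1 - y1| * |x1^2 + x1*y1 + y1^2 - 1| ≤ |x1 - y1| * 13 :=
        mul_le_mul_of_nonneg_left h2 (abs_nonneg _)
      _ = 13 * |x1 - y1| := by ring
    calc |x1^3 - x1 - (y1^3 - y1)| ≤ 13 * |x1 - y1| := key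
    _ ≤ 13 * max |x1 - y1| |x2 - y2| := by
        have := le_max_left |x1 - y1| |x2 - y2|; linarith

lemma energy_const {u v : ℝ → ℝ} (hu : ∀ t, HasDerivAt u (v t) t)
    (hv : ∀ t, HasDerivAt v (u t ^ 3 - u t) t) (t : ℝ) :
    v t ^ 2 / 2 + u t ^ 2 / 2 - u t ^ 4 / 4 = v 0 ^ 2 / 2 + u 0 ^ 2 / 2 - u 0 ^ 4 / 4 := by
  set E : ℝ → ℝ := fun t => v t ^ 2 / 2 + u t ^ 2 / 2 - u t ^ 4 / 4 with hE
  have hd : ∀ s, HasDerivAt E 0 s := by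
    intro s
    have h1 := (((hv s).pow 2).div_const 2).add (((hu s).pow 2).div_const 2)
    have h2 := h1.sub (((hu s).pow 4).div_const 4)
    refine h2.congr_deriv (Eq.symm ?_)
    ring
  exact is_const_of_deriv_eq_zero (𝕜 := ℝ) (f := E)
    (fun s => (hd s).differentiableAt) (fun s => (hd s).deriv) t 0

lemma u_sq_le {κ : ℝ} {u v : ℝ → ℝ} (hκ0 : 0 < κ) (hκ1 : κ < 1)
    (hu : ∀ t, HasDerivAt u (v t) t)
    (hv : ∀ t, HasDerivAt v (u t ^ 3 - u t) t)
    (hu0 : u 0 = 0) (hv0 : v 0 = Real.sqrt (2 * (κ^2 / (1 + κ^2)^2))) (t : ℝ) :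
    u t ^ 2 ≤ 2*κ^2/(1+κ^2) := by
  have hP : (0:ℝ) < 1 + κ^2 := by positivity
  have hk2 : κ^2 < 1 := by nlinarith
  have hv02 : v 0 ^ 2 = 2 * (κ^2 / (1 + κ^2)^2) := by
    rw [hv0, Real.sq_sqrt (by positivity)]
  have energy : ∀ s, v s ^ 2 = 2 * (κ^2 / (1 + κ^2)^2) - u s ^2 + u s ^4 / 2 := by
    intro s
    have := energy_const hu hv s
    rw [hu0, hv02] at this
    nlinarith [this]
  set A := 2*κ^2/(1+κ^2) with hA
  set B := 2/(1+κ^2) with hB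
  have hAB : A < B := by
    rw [hA, hB, div_lt_div_iff₀ hP hP]
    nlinarith [hk2, hP]
  have dich : ∀ s, u s ^2 ≤ A ∨ B ≤ u s ^2 := by
    intro s
    by_contra hcon
    push_neg at hcon
    obtain ⟨h1, h2⟩ := hcon
    have hfac : v s ^2 = (u s^2 - A) * (u s^2 - B) / 2 := by
      rw [energy s, hA, hB]; field_simp; ring
    nlinarith [sq_nonneg (v s), hfac]
  rcases dich t with h | h
  · exact h
  · exfalso
    set m := (A+B)/2 with hm
    have hg : ContinuousOn (fun s => u s ^2) (Set.uIcc 0 t) := by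
      apply Continuous.continuousOn
      exact (Differentiable.continuous (fun s => (hu s).differentiableAt)).pow 2
    have hA0 : 0 ≤ A := by rw [hA]; positivity
    have hmem : m ∈ Set.uIcc ((fun s => u s^2) 0) ((fun s => u s^2) t) := by
      simp only [hu0]
      rw [Set.mem_uIcc]
      left
      refine ⟨by rw [hm]; nlinarith [hAB, hA0], by rw [hm]; nlinarith [hAB, h]⟩
    obtain ⟨s, _, hs⟩ := intermediate_value_uIcc hg hmem
    have hs' : u s ^ 2 = m := hs
    rcases dich s with h' | h' <;> rw [hs'] at h' <;> rw [hm] at h' <;> nlinarith [hAB]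

/-! ### Uniqueness: `u = wsol`, `v = wvsol` -/

lemma one_le_sg {κ : ℝ} : 1 ≤ sg κ := by
  have := Real.sqrt_le_sqrt (show (1:ℝ) ≤ 1+κ^2 by nlinarith [sq_nonneg κ])
  simpa [sg] using this

lemma aa_nonneg {κ : ℝ} (hκ0 : 0 ≤ κ) : 0 ≤ aa κ :=
  div_nonneg (by positivity) sg_pos.le

lemma aa_le_two {κ : ℝ} (hκ0 : 0 ≤ κ) : aa κ ≤ 2 := by
  have h1 := aa_sq hκ0
  have h2 : aa κ ^ 2 ≤ 2 := by
    rw [h1, div_le_iff₀ (by positivity : (0:ℝ) < 1 + κ^2)]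
    nlinarith
  nlinarith [aa_nonneg hκ0, sq_nonneg (aa κ - 2)]

lemma wsol_mem {κ : ℝ} (hκ : κ^2 < 1) (hκ0 : 0 ≤ κ) (t : ℝ) :
    |wsol κ t| ≤ 2 ∧ |wvsol κ t| ≤ 2 := by
  constructor
  · rw [wsol, abs_mul, abs_of_nonneg (aa_nonneg hκ0)]
    calc aa κ * |Real.sin (amf κ (t / sg κ))| ≤ aa κ * 1 :=
      mul_le_mul_of_nonneg_left (abs_sin_le_one _) (aa_nonneg hκ0)
    _ ≤ 2 := by simpa using aa_le_two hκ0
  · rw [wvsol, abs_div, abs_of_pos (sg_pos), abs_mul, abs_mul,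
      abs_of_nonneg (aa_nonneg hκ0), abs_of_pos (del_pos hκ _)]
    rw [div_le_iff₀ sg_pos]
    calc aa κ * |Real.cos (amf κ (t / sg κ))| * del κ (amf κ (t / sg κ))
        ≤ aa κ * 1 * 1 := by
          apply mul_le_mul (mul_le_mul_of_nonneg_left (abs_cos_le_one _) (aa_nonneg hκ0))
            (del_le_one _) (del_pos hκ _).le
          simpa using aa_nonneg hκ0
    _ = aa κ := by ring
    _ ≤ 2 := aa_le_two hκ0
    _ ≤ 2 * sg κ := by nlinarith [one_le_sg (κ := κ)]

lemma sol_eq {κ : ℝ} {u v : ℝ → ℝ} (hκ0 : 0 < κ) (hκ1 : κ < 1)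
    (hu : ∀ t, HasDerivAt u (v t) t)
    (hv : ∀ t, HasDerivAt v (u t ^ 3 - u t) t)
    (hu0 : u 0 = 0) (hv0 : v 0 = Real.sqrt (2 * (κ^2 / (1 + κ^2)^2))) (t : ℝ) :
    u t = wsol κ t ∧ v t = wvsol κ t := by
  have hk2 : κ^2 < 1 := by nlinarith
  have hP : (0:ℝ) < 1 + κ^2 := by positivity
  set S : Set (ℝ × ℝ) := {p : ℝ × ℝ | |p.1| ≤ 2 ∧ |p.2| ≤ 2} with hS
  have hu_bd : ∀ s, |u s| ≤ 2 := by
    intro s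
    have h2 : u s ^ 2 ≤ 2 := le_trans (u_sq_le hκ0 hκ1 hu hv hu0 hv0 s)
      (by rw [div_le_iff₀ hP]; nlinarith)
    rw [abs_le]
    constructor <;> nlinarith [sq_nonneg (u s + 2), sq_nonneg (u s - 2)]
  have hv_bd : ∀ s, |v s| ≤ 2 := by
    intro s
    have hv02 : v 0 ^ 2 = 2 * (κ^2 / (1 + κ^2)^2) := by
      rw [hv0, Real.sq_sqrt (by positivity)]
    have he := energy_const hu hv s
    rw [hu0, hv02] at he
    have hus : u s ^ 2 ≤ 2 := le_trans (u_sq_le hκ0 hκ1 hu hv hu0 hv0 s)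
      (by rw [div_le_iff₀ hP]; nlinarith)
    have h2 : v s ^ 2 ≤ 4 := by
      have hc : κ^2/(1+κ^2)^2 ≤ 1 := by
        rw [div_le_one (by positivity)]; nlinarith
      nlinarith [sq_nonneg (u s), hus, he, hc]
    rw [abs_le]
    constructor <;> nlinarith [sq_nonneg (v s + 2), sq_nonneg (v s - 2)]
  -- initial values agree
  have hinit : (u 0, v 0) = (wsol κ 0, wvsol κ 0) := by
    have ham0 : amf κ ((0:ℝ) / sg κ) = 0 := by rw [zero_div]; exact amf_zero hk2
    have hw0 : wsol κ 0 = 0 := by rw [wsol, ham0, Real.sin_zero, mul_zero]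
    have hdel0 : del κ 0 = 1 := by rw [del]; simp
    have hwv0 : wvsol κ 0 = Real.sqrt 2 * κ / (1 + κ^2) := by
      rw [wvsol, ham0, Real.cos_zero, hdel0, aa, mul_one, mul_one, div_div]
      congr 1
      rw [← sg_sq (κ := κ)]; ring
    have hv0' : v 0 = Real.sqrt 2 * κ / (1 + κ^2) := by
      rw [hv0, show 2 * (κ^2 / (1 + κ^2)^2) = (Real.sqrt 2 * κ / (1 + κ^2))^2 by
        rw [div_pow, mul_pow, Real.sq_sqrt (by norm_num : (0:ℝ) ≤ 2)]; ring]
      exact Real.sqrt_sq (by positivity)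
    rw [hu0, hw0, hv0', hwv0]
  -- apply uniqueness on a large interval
  have key := ODE_solution_unique_of_mem_Ioo
    (v := fun _ : ℝ => fun p : ℝ × ℝ => (p.2, p.1^3 - p.1)) (s := fun _ : ℝ => S)
    (K := 13) (f := fun τ => (u τ, v τ)) (g := fun τ => (wsol κ τ, wvsol κ τ))
    (t₀ := 0) (a := -(|t|+1)) (b := |t|+1)
    (fun _ _ => lip13)
    (by constructor <;> [nlinarith [abs_nonneg t]; nlinarith [abs_nonneg t]])
    (fun τ _ => ⟨(hu τ).prodMk (hv τ), ⟨hu_bd τ, hv_bd τ⟩⟩)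
    (fun τ _ => ⟨(wsol_hasDerivAt hk2 τ).prodMk (wvsol_hasDerivAt hk2 hκ0.le τ),
      wsol_mem hk2 hκ0.le τ⟩)
    hinit
  have ht : t ∈ Set.Ioo (-(|t|+1)) (|t|+1) := by
    constructor <;> nlinarith [abs_nonneg t, le_abs_self t, neg_abs_le t]
  have := key ht
  exact ⟨congrArg Prod.fst this, congrArg Prod.snd this⟩


/-! ### Evaluation of the kinetic-energy integral -/

lemma del_pi_sub {κ : ℝ} (x : ℝ) : del κ (Real.pi - x) = del κ x := by
  rw [del, del, Real.sin_pi_sub]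

lemma del_add_pi {κ : ℝ} (x : ℝ) : del κ (x + Real.pi) = del κ x := by
  rw [del, del, Real.sin_add_pi]
  congr 1
  ring

lemma Fint_two_pi {κ : ℝ} (hκ : κ^2 < 1) : Fint κ (2*Real.pi) = 4 * Fint κ (Real.pi/2) :=
  quad_integral _ (inv_del_cont hκ) (fun x => by rw [del_pi_sub]) (fun x => by rw [del_add_pi])

lemma Pint_two_pi {κ : ℝ} (hκ : κ^2 < 1) : Pint κ (2*Real.pi) = 4 * Pint κ (Real.pi/2) :=
  quad_integral _ ((Real.continuous_cos.pow 2).mul del_cont)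
    (fun x => by rw [del_pi_sub, Real.cos_pi_sub]; ring)
    (fun x => by rw [del_add_pi, Real.cos_add_pi]; ring)

lemma Pint_hasDerivAt {κ : ℝ} (hκ : κ^2 < 1) (x : ℝ) :
    HasDerivAt (Pint κ) (Real.cos x ^ 2 * del κ x) x :=
  intervalIntegral.integral_hasDerivAt_right
    (((Real.continuous_cos.pow 2).mul del_cont).intervalIntegrable _ _)
    ((Real.continuous_cos.pow 2).mul del_cont).aestronglyMeasurable.stronglyMeasurableAtFilter
    ((Real.continuous_cos.pow 2).mul del_cont).continuousAt

lemma integral_wvsol_sq {κ : ℝ} (hκ0 : 0 < κ) (hκ : κ^2 < 1) :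
    ∫ t in (0:ℝ)..(4 * sg κ * Fint κ (Real.pi/2)), (wvsol κ t)^2
      = (aa κ^2 / sg κ) * (4 * Pint κ (Real.pi/2)) := by
  set T := 4 * sg κ * Fint κ (Real.pi/2) with hT
  have hH : ∀ t : ℝ, HasDerivAt (fun t => (aa κ^2 / sg κ) * Pint κ (amf κ (t / sg κ)))
      ((wvsol κ t)^2) t := by
    intro t
    have h1 := ((Pint_hasDerivAt hκ (amf κ (t / sg κ))).comp t
      (am_comp_hasDerivAt hκ t)).const_mul (aa κ^2 / sg κ)
    refine h1.congr_deriv (Eq.symm ?_)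
    rw [wvsol]
    field_simp
  have hwvc : Continuous (wvsol κ) := by
    have hamc : Continuous (fun t : ℝ => amf κ (t / sg κ)) :=
      (amf_continuous hκ).comp (continuous_id.div_const _)
    exact (((continuous_const.mul (Real.continuous_cos.comp hamc)).mul
      (del_cont.comp hamc)).div_const _)
  have key := intervalIntegral.integral_eq_sub_of_hasDerivAt
    (f := fun t => (aa κ^2 / sg κ) * Pint κ (amf κ (t / sg κ)))
    (f' := fun t => (wvsol κ t)^2) (a := 0) (b := T)
    (fun t _ => hH t) ((hwvc.pow 2).intervalIntegrable _ _)
  have hsz : amf κ ((0:ℝ) / sg κ) = 0 := by rw [zero_div]; exact amf_zero hκ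
  have hTz : amf κ (T / sg κ) = 2 * Real.pi := by
    have h4 : T / sg κ = 4 * Fint κ (Real.pi/2) := by
      rw [hT]
      field_simp [(sg_pos (κ := κ)).ne']
    rw [h4, ← Fint_two_pi hκ, amf_leftInv hκ]
  have key2 : ∫ t in (0:ℝ)..T, (wvsol κ t)^2
      = aa κ^2 / sg κ * Pint κ (amf κ (T / sg κ))
        - aa κ^2 / sg κ * Pint κ (amf κ ((0:ℝ) / sg κ)) := key
  have hPz : Pint κ 0 = 0 := by
    rw [Pint, intervalIntegral.integral_same]
  rw [key2, hsz, hTz, hPz, Pint_two_pi hκ]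
  ring

/-! ### Main theorem -/

/-- for `κ ∈ (0,1)`, `c = κ²/(1+κ²)²`, and `u` the solution of
`u″ = u³ − u`, `u(0) = 0`, `u′(0) = √(2c)` (periodic of period `T = 4√(1+κ²)K(κ)`), the
time average of the kinetic energy satisfies
`(1/T)∫₀ᵀ u′(t)² dt − c = −(1/(3(1+κ²)))[(2+κ²)/(1+κ²) − 2E(κ)/K(κ)]`. -/
theorem statement13 (κ : ℝ) (hκ0 : 0 < κ) (hκ1 : κ < 1) (u v : ℝ → ℝ)
    (hu : ∀ t, HasDerivAt u (v t) t)
    (hv : ∀ t, HasDerivAt v (u t ^ 3 - u t) t)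
    (hu0 : u 0 = 0)
    (hv0 : v 0 = Real.sqrt (2 * (κ^2 / (1 + κ^2)^2))) :
    (1 / (4 * Real.sqrt (1 + κ^2) * ellK κ)) *
        (∫ t in (0:ℝ)..(4 * Real.sqrt (1 + κ^2) * ellK κ), (v t)^2)
      - κ^2 / (1 + κ^2)^2
      = -(1 / (3 * (1 + κ^2))) * ((2 + κ^2) / (1 + κ^2) - 2 * ellE κ / ellK κ) := by
  have hk2 : κ^2 < 1 := by nlinarith
  have hP : (0:ℝ) < 1 + κ^2 := by positivity
  have hKe : ellK κ = Fint κ (Real.pi/2) := rfl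
  have hEe : ellE κ = ∫ φ in (0:ℝ)..(Real.pi/2), del κ φ := rfl
  have hsq : Real.sqrt (1 + κ^2) = sg κ := rfl
  have hint_eq : (∫ t in (0:ℝ)..(4 * Real.sqrt (1+κ^2) * ellK κ), (v t)^2)
      = ∫ t in (0:ℝ)..(4 * sg κ * Fint κ (Real.pi/2)), (wvsol κ t)^2 := by
    apply intervalIntegral.integral_congr
    intro τ _
    show v τ ^ 2 = wvsol κ τ ^ 2
    rw [(sol_eq hκ0 hκ1 hu hv hu0 hv0 τ).2]
  rw [hKe, hsq] at hint_eq ⊢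
  rw [hEe, hint_eq, integral_wvsol_sq hκ0 hk2, aa_sq hκ0.le]
  have hident : 3*κ^2 * Pint κ (Real.pi/2)
      - (1+κ^2) * (∫ φ in (0:ℝ)..(Real.pi/2), del κ φ)
      + (1-κ^2) * Fint κ (Real.pi/2) = 0 := ell_identity hk2
  have hK0 : 0 < Fint κ (Real.pi/2) :=
    lt_of_lt_of_le (by positivity) (le_Fint hk2 _ (by positivity))
  have hsg2 : sg κ ^ 2 = 1 + κ^2 := sg_sq
  have hsg0 : (0:ℝ) < sg κ := sg_pos
  set J := Pint κ (Real.pi/2)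
  set K := Fint κ (Real.pi/2)
  set E := ∫ φ in (0:ℝ)..(Real.pi/2), del κ φ
  field_simp
  ring_nf
  linear_combination (2*(1+κ^2)) * hident
    + (2*(1-κ^2)*K - 2*(1+κ^2)*E) * hsg2
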